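/- Let α : 𝔽₂ⁿ → 𝔽₂ be a cubic form and A ⊆ 𝔽₂ⁿ a subset such that for every two distinct elements x, x' ∈ A one has α(x + x') = 1. Then |A| ≤ ρ(2ⁿ), where ρ is the Hurwitz–Radon function: ρ(2ⁿ) = 2n+1 if n ≡ 0 (mod 4), ρ(2ⁿ) = 2n if n ≡ 1 or 2 (mod 4), and ρ(2ⁿ) = 2n+2 if n ≡ 3 (mod 4). -/

import Mathlib

/-- A cubic form on `𝔽₂ⁿ`: a function of the form
`α(x) = Σ_{1 ≤ i ≤ j ≤ k ≤ n} α_{ijk} x_i x_j x_k` with coefficients in `𝔽₂`. -/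
def IsCubicForm {n : ℕ} (α : (Fin n → ZMod 2) → ZMod 2) : Prop :=
  ∃ c : Fin n → Fin n → Fin n → ZMod 2,
    ∀ x, α x = ∑ i, ∑ j, ∑ k, if i ≤ j ∧ j ≤ k then c i j k * x i * x j * x k else 0

/-- The Hurwitz–Radon function evaluated at `2ⁿ`, as a function of `n`:
`ρ(2ⁿ) = 2n+1` if `n ≡ 0 (mod 4)`, `ρ(2ⁿ) = 2n` if `n ≡ 1, 2 (mod 4)`,
`ρ(2ⁿ) = 2n+2` if `n ≡ 3 (mod 4)`. -/
def hurwitzRadonPow2 (n : ℕ) : ℕ :=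
  if n % 4 = 0 then 2 * n + 1
  else if n % 4 = 3 then 2 * n + 2
  else 2 * n

namespace CubicHR

variable {n : ℕ}

abbrev V (n : ℕ) := Fin n → ZMod 2

def ell (c : Fin n → Fin n → Fin n → ZMod 2) (x y : V n) : ZMod 2 :=
  ∑ i, ∑ j, ∑ k, if i ≤ j ∧ j ≤ k then
    c i j k * (x i * x j * y k + x i * y j * x k + y i * x j * x k) else 0

variable {c : Fin n → Fin n → Fin n → ZMod 2}
variable {α : (V n) → ZMod 2}
variable (hc : ∀ x, α x = ∑ i, ∑ j, ∑ k, if i ≤ j ∧ j ≤ k then c i j k * x i * x j * x k else 0)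

include hc

lemma deriv_eq (x y : V n) : α (x + y) = α x + α y + ell c x y + ell c y x := by
  rw [hc, hc, hc]
  unfold ell
  simp only [← Finset.sum_add_distrib]
  refine Finset.sum_congr rfl fun i _ => ?_
  refine Finset.sum_congr rfl fun j _ => ?_
  refine Finset.sum_congr rfl fun k _ => ?_
  split_ifs with hg
  · simp only [Pi.add_apply]
    have : ∀ (ci xi xj xk yi yj yk : ZMod 2),
      ci * (xi + yi) * (xj + yj) * (xk + yk) =
        ci * xi * xj * xk + ci * yi * yj * yk
        + ci * (xi * xj * yk + xi * yj * xk + yi * xj * xk)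
        + ci * (yi * yj * xk + yi * xj * yk + xi * yj * yk) := by decide
    exact this _ _ _ _ _ _ _
  · simp

lemma ell_self (x : V n) : ell c x x = α x := by
  rw [hc]
  unfold ell
  refine Finset.sum_congr rfl fun i _ => ?_
  refine Finset.sum_congr rfl fun j _ => ?_
  refine Finset.sum_congr rfl fun k _ => ?_
  split_ifs with hg
  · have : ∀ (ci xi xj xk : ZMod 2),
      ci * (xi * xj * xk + xi * xj * xk + xi * xj * xk) = ci * xi * xj * xk := by decide
    exact this _ _ _ _
  · rfl

omit hc

lemma ell_add_right (x y z : V n) : ell c x (y + z) = ell c x y + ell c x z := by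
  unfold ell
  simp only [← Finset.sum_add_distrib]
  refine Finset.sum_congr rfl fun i _ => ?_
  refine Finset.sum_congr rfl fun j _ => ?_
  refine Finset.sum_congr rfl fun k _ => ?_
  split_ifs with hg
  · simp only [Pi.add_apply]
    have : ∀ (ci xi xj xk yi yj yk zi zj zk : ZMod 2),
      ci * (xi * xj * (yk + zk) + xi * (yj + zj) * xk + (yi + zi) * xj * xk) =
        ci * (xi * xj * yk + xi * yj * xk + yi * xj * xk)
        + ci * (xi * xj * zk + xi * zj * xk + zi * xj * xk) := by decide
    exact this _ _ _ _ _ _ _ _ _ _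
  · simp

lemma ell_smul_right (x y : V n) (a : ZMod 2) : ell c x (a • y) = a * ell c x y := by
  unfold ell
  simp only [Finset.mul_sum]
  refine Finset.sum_congr rfl fun i _ => ?_
  refine Finset.sum_congr rfl fun j _ => ?_
  refine Finset.sum_congr rfl fun k _ => ?_
  split_ifs with hg
  · simp only [Pi.smul_apply, smul_eq_mul]
    have : ∀ (ci xi xj xk yi yj yk a : ZMod 2),
      ci * (xi * xj * (a * yk) + xi * (a * yj) * xk + (a * yi) * xj * xk) =
        a * (ci * (xi * xj * yk + xi * yj * xk + yi * xj * xk)) := by decide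
    exact this _ _ _ _ _ _ _ _
  · simp

abbrev W (n : ℕ) := (Fin n → ZMod 2) × (Fin n → ZMod 2)

def qf (w : W n) : ZMod 2 := ∑ t, w.2 t * w.1 t
def Phi (w w' : W n) : ZMod 2 := (∑ t, w.2 t * w'.1 t) + ∑ t, w'.2 t * w.1 t

lemma Phi_comm (w w' : W n) : Phi w w' = Phi w' w := add_comm _ _

lemma Phi_self (w : W n) : Phi w w = 0 := by
  have : ∀ a : ZMod 2, a + a = 0 := by decide
  exact this _

lemma Phi_zero_left (w : W n) : Phi 0 w = 0 := by
  simp [Phi]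

lemma Phi_add_left (a b w : W n) : Phi (a + b) w = Phi a w + Phi b w := by
  simp only [Phi, Prod.fst_add, Prod.snd_add, Pi.add_apply, add_mul, mul_add,
    Finset.sum_add_distrib]
  ring

lemma Phi_sum_left (F : Finset (W n)) (w : W n) :
    Phi (∑ x ∈ F, x) w = ∑ x ∈ F, Phi x w := by
  classical
  induction F using Finset.induction_on with
  | empty => simpa using Phi_zero_left w
  | @insert a F' hx ih => rw [Finset.sum_insert hx, Finset.sum_insert hx,
      Phi_add_left, ih]

lemma qf_add (a b : W n) : qf (a + b) = qf a + qf b + Phi a b := by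
  simp only [qf, Phi, Prod.fst_add, Prod.snd_add, Pi.add_apply, add_mul, mul_add,
    Finset.sum_add_distrib]
  ring

def rZ (s : ℕ) : ZMod 2 := if s % 4 = 0 ∨ s % 4 = 3 then 0 else 1

lemma natCast_zmod2 (s : ℕ) : (s : ZMod 2) = ((s % 4 : ℕ) : ZMod 2) := by
  conv_lhs => rw [← Nat.div_add_mod s 4]
  push_cast
  have h4 : (4 : ZMod 2) = 0 := by decide
  rw [h4]
  ring

lemma rZ_succ (s : ℕ) : rZ (s + 1) = 1 + rZ s + (s : ZMod 2) := by
  have h : s % 4 = 0 ∨ s % 4 = 1 ∨ s % 4 = 2 ∨ s % 4 = 3 := by omega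
  rw [natCast_zmod2]
  rcases h with h | h | h | h <;>
    simp [rZ, Nat.add_mod, h] <;> decide



lemma qf_sum (T U : Finset (W n)) (hU : U ⊆ T)
    (hq : ∀ x ∈ T, qf x = 1)
    (hP : ∀ x ∈ T, ∀ y ∈ T, x ≠ y → Phi x y = 1) :
    qf (∑ x ∈ U, x) = rZ U.card := by
  classical
  induction U using Finset.induction_on with
  | empty => simp [qf, rZ]
  | @insert a U' ha ih =>
    have hU' : U' ⊆ T := fun x hx => hU (Finset.mem_insert_of_mem hx)
    have haT : a ∈ T := hU (Finset.mem_insert_self _ _)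
    rw [Finset.sum_insert ha, qf_add, ih hU', Finset.card_insert_of_notMem ha,
      rZ_succ, hq a haT, Phi_comm, Phi_sum_left]
    have : ∑ x ∈ U', Phi x a = (U'.card : ZMod 2) := by
      rw [Finset.sum_congr rfl (fun x hx => hP x (hU' hx) a haT (by rintro rfl; exact ha hx))]
      simp [Finset.sum_const]
    rw [this]

lemma dep_cases (T T' : Finset (W n)) (hsub : T' ⊆ T)
    (hP : ∀ x ∈ T, ∀ y ∈ T, x ≠ y → Phi x y = 1)
    (hsum : ∑ x ∈ T', x = 0) :
    T' = ∅ ∨ (T' = T ∧ T.card % 2 = 1) := by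
  classical
  rcases T'.eq_empty_or_nonempty with he | ⟨s, hs⟩
  · exact Or.inl he
  right
  have key : ∀ w ∈ T, Phi (∑ x ∈ T', x) w = 0 := by
    intro w _; rw [hsum, Phi_zero_left]
  have hodd : T'.card % 2 = 1 := by
    have h0 := key s (hsub hs)
    rw [Phi_sum_left] at h0
    rw [← Finset.add_sum_erase _ _ hs, Phi_self, zero_add] at h0
    have : ∑ x ∈ T'.erase s, Phi x s = ((T'.erase s).card : ZMod 2) := by
      rw [Finset.sum_congr rfl (fun x hx => hP x (hsub (Finset.mem_of_mem_erase hx)) s (hsub hs)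
        (Finset.ne_of_mem_erase hx))]
      simp [Finset.sum_const]
    rw [this] at h0
    have hcast : ((T'.erase s).card : ZMod 2) = 0 := h0
    have h2 : 2 ∣ (T'.erase s).card := by
      rwa [ZMod.natCast_eq_zero_iff] at hcast
    have hc : (T'.erase s).card = T'.card - 1 := Finset.card_erase_of_mem hs
    have hpos : 1 ≤ T'.card := Finset.card_pos.2 ⟨s, hs⟩
    omega
  have hTT : T' = T := by
    by_contra hne
    obtain ⟨w, hwT, hwT'⟩ : ∃ w, w ∈ T ∧ w ∉ T' := by
      by_contra hcon
      push_neg at hcon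
      exact hne (Finset.Subset.antisymm hsub (fun x hx => hcon x hx))
    have h0 := key w hwT
    rw [Phi_sum_left] at h0
    have : ∑ x ∈ T', Phi x w = (T'.card : ZMod 2) := by
      rw [Finset.sum_congr rfl (fun x hx => hP x (hsub hx) w hwT
        (by rintro rfl; exact hwT' hx))]
      simp [Finset.sum_const]
    rw [this] at h0
    have h2 : 2 ∣ T'.card := by rwa [ZMod.natCast_eq_zero_iff] at h0
    omega
  exact ⟨hTT, by rw [← hTT]; exact hodd⟩

lemma indep_of (T T'' : Finset (W n)) (hsub : T'' ⊆ T)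
    (hP : ∀ x ∈ T, ∀ y ∈ T, x ≠ y → Phi x y = 1)
    (hcase : T'' ≠ T ∨ T.card % 2 = 0) :
    LinearIndependent (ZMod 2) ((↑) : ↑T'' → W n) := by
  classical
  rw [Fintype.linearIndependent_iff]
  intro g hg
  set g' : W n → ZMod 2 := fun x => if h : x ∈ T'' then g ⟨x, h⟩ else 0 with hg'
  have hsum : ∑ x ∈ T''.filter (fun x => g' x = 1), x = 0 := by
    have e1 : ∑ i : ↑T'', g i • (i : W n) = ∑ x ∈ T'', g' x • x := by
      rw [← Finset.sum_coe_sort T'' (fun x => g' x • x)]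
      refine Finset.sum_congr rfl fun i _ => ?_
      simp [hg', i.2]
    have e2 : ∑ x ∈ T'', g' x • x = ∑ x ∈ T''.filter (fun x => g' x = 1), x := by
      rw [Finset.sum_filter]
      refine Finset.sum_congr rfl fun x _ => ?_
      have h01 : ∀ a : ZMod 2, a = 0 ∨ a = 1 := by decide
      rcases h01 (g' x) with h | h <;> simp [h]
    rw [← e2, ← e1, hg]
  have hfsub : T''.filter (fun x => g' x = 1) ⊆ T := fun x hx =>
    hsub (Finset.mem_of_mem_filter x hx)
  rcases dep_cases T (T''.filter (fun x => g' x = 1)) hfsub hP hsum with he | ⟨heq, hodd⟩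
  · intro i
    by_contra hgi
    have h1 : g' (i : W n) = 1 := by
      have : g' (i : W n) = g i := by simp [hg', i.2]
      rw [this]
      have : ∀ a : ZMod 2, a ≠ 0 → a = 1 := by decide
      exact this _ hgi
    have : (i : W n) ∈ T''.filter (fun x => g' x = 1) :=
      Finset.mem_filter.2 ⟨i.2, h1⟩
    rw [he] at this
    exact absurd this (Finset.notMem_empty _)
  · exfalso
    have hTT : T'' = T := Finset.Subset.antisymm hsub (by
      rw [← heq]; exact fun x hx => Finset.mem_of_mem_filter x hx)
    rcases hcase with hne | heven
    · exact hne hTT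
    · omega



def chi (t : ZMod 2) : ℤ := if t = 0 then 1 else -1

lemma sumA : ∑ x : W n, chi (qf x) = 2 ^ n := by
  classical
  rw [Fintype.sum_prod_type]
  have inner : ∀ u : V n, (∑ φ : V n, chi (qf (u, φ)))
      = if u = 0 then (2 ^ n : ℤ) else 0 := by
    intro u
    by_cases hu : u = 0
    · subst hu
      simp [chi, qf, Finset.sum_const, Fintype.card_fun]
    · rw [if_neg hu]
      obtain ⟨t₀, ht₀⟩ : ∃ t₀, u t₀ ≠ 0 := by
        by_contra hcon
        push_neg at hcon
        exact hu (funext fun t => hcon t)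
      have hu1 : u t₀ = 1 := by
        have : ∀ a : ZMod 2, a ≠ 0 → a = 1 := by decide
        exact this _ ht₀
      set s₀ : V n := Pi.single t₀ 1 with hs₀
      have hs₀t : ∀ t, s₀ t * u t = if t = t₀ then 1 else 0 := by
        intro t
        by_cases ht : t = t₀
        · subst ht; simp [hs₀, hu1]
        · simp [hs₀, Pi.single_apply, ht]
      have key : ∀ φ : V n, qf (u, φ + s₀) = qf (u, φ) + 1 := by
        intro φ
        show (∑ t, (φ + s₀) t * u t) = (∑ t, φ t * u t) + 1
        simp only [Pi.add_apply, add_mul, Finset.sum_add_distrib]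
        congr 1
        rw [Finset.sum_congr rfl (fun t _ => hs₀t t)]
        simp
      refine Finset.sum_ninvolution (fun φ => φ + s₀) ?_ ?_ (fun _ => Finset.mem_univ _) ?_
      · intro φ
        rw [key φ]
        have : ∀ a : ZMod 2, chi a + chi (a + 1) = 0 := by decide
        exact this _
      · intro φ _ hcon
        have h1 := congrFun hcon t₀
        simp [hs₀] at h1
      · intro φ
        have : ∀ a b : ZMod 2, a + b + b = a := by decide
        ext t
        simp only [Pi.add_apply]
        exact this _ _
  rw [Finset.sum_congr rfl (fun u _ => inner u)]
  simp



lemma sum_indicator (T U : Finset (W n)) (hU : U ⊆ T) :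
    ∑ i : ↑T, (if (i : W n) ∈ U then (1 : ZMod 2) else 0) • (i : W n) = ∑ x ∈ U, x := by
  classical
  rw [Finset.sum_coe_sort T (fun x => (if x ∈ U then (1 : ZMod 2) else 0) • x)]
  simp only [ite_smul, one_smul, zero_smul]
  rw [← Finset.sum_filter]
  congr 1
  rw [Finset.filter_mem_eq_inter, Finset.inter_eq_right.2 hU]

lemma sum_inj (T : Finset (W n))
    (hind : LinearIndependent (ZMod 2) ((↑) : ↑T → W n)) :
    ∀ U₁, U₁ ⊆ T → ∀ U₂, U₂ ⊆ T → (∑ x ∈ U₁, x) = (∑ x ∈ U₂, x) → U₁ = U₂ := by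
  classical
  intro U₁ h₁ U₂ h₂ hsum
  have hg := Fintype.linearIndependent_iff.1 hind
    (fun i => (if (i : W n) ∈ U₁ then (1 : ZMod 2) else 0)
      + (if (i : W n) ∈ U₂ then (1 : ZMod 2) else 0))
  have hzero : ∑ i : ↑T, ((if (i : W n) ∈ U₁ then (1 : ZMod 2) else 0)
      + (if (i : W n) ∈ U₂ then (1 : ZMod 2) else 0)) • (i : W n) = 0 := by
    rw [Finset.sum_congr rfl (fun i _ => add_smul _ _ _), Finset.sum_add_distrib,
      sum_indicator T U₁ h₁, sum_indicator T U₂ h₂, hsum]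
    have : ∀ a : W n, a + a = 0 := by
      intro a
      have h2 : ∀ b : ZMod 2, b + b = 0 := by decide
      ext t <;> exact h2 _
    exact this _
  have hall := hg hzero
  ext x
  by_cases hxT : x ∈ T
  · have := hall ⟨x, hxT⟩
    simp only at this
    constructor
    · intro hx1
      by_contra hx2
      rw [if_pos hx1, if_neg hx2] at this
      simp at this
    · intro hx2
      by_contra hx1
      rw [if_neg hx1, if_pos hx2] at this
      simp at this
  · constructor
    · intro hx; exact absurd (h₁ hx) hxT
    · intro hx; exact absurd (h₂ hx) hxT

lemma sumB (T : Finset (W n)) (hcard : T.card = 2 * n)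
    (hind : LinearIndependent (ZMod 2) ((↑) : ↑T → W n)) :
    ∑ x : W n, chi (qf x) = ∑ U ∈ T.powerset, chi (qf (∑ x ∈ U, x)) := by
  classical
  refine (Finset.sum_bij (fun (U : Finset (W n)) (_ : U ∈ T.powerset) => ∑ x ∈ U, x)
    (fun _ _ => Finset.mem_univ _) ?_ ?_ ?_).symm
  · intro U₁ h₁ U₂ h₂ h
    exact sum_inj T hind U₁ (Finset.mem_powerset.1 h₁) U₂ (Finset.mem_powerset.1 h₂) h
  · intro b _
    have hcards : (Finset.univ : Finset (W n)).card ≤ T.powerset.card := by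
      rw [Finset.card_powerset, hcard]
      have : Fintype.card (W n) = 2 ^ n * 2 ^ n := by
        simp [Fintype.card_prod, Fintype.card_fun]
      rw [Finset.card_univ, this]
      rw [two_mul, pow_add]
    obtain ⟨U, hU, hb⟩ := Finset.surj_on_of_inj_on_of_card_le
      (fun (U : Finset (W n)) (_ : U ∈ T.powerset) => ∑ x ∈ U, x)
      (fun _ _ => Finset.mem_univ _)
      (fun U₁ U₂ h₁ h₂ h =>
        sum_inj T hind U₁ (Finset.mem_powerset.1 h₁) U₂ (Finset.mem_powerset.1 h₂) h)
      hcards b (Finset.mem_univ b)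
    exact ⟨U, hU, hb.symm⟩
  · intro U _; rfl



def epsZ (s : ℕ) : ℤ := if s % 4 = 0 ∨ s % 4 = 3 then 1 else -1

lemma chi_rZ (s : ℕ) : chi (rZ s) = epsZ s := by
  unfold chi rZ epsZ
  by_cases h : s % 4 = 0 ∨ s % 4 = 3
  · rw [if_pos h, if_pos h, if_pos rfl]
  · rw [if_neg h, if_neg h, if_neg (by decide : ¬(1 : ZMod 2) = 0)]

def zetaG : GaussianInt := ⟨1, 1⟩
def IG : GaussianInt := ⟨0, 1⟩

lemma IG4 : IG ^ 4 = 1 := by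
  have : IG ^ 4 = IG * IG * IG * IG := by ring
  rw [this]
  rfl

lemma IG_pow_mod (s : ℕ) : IG ^ s = IG ^ (s % 4) := by
  conv_lhs => rw [← Nat.div_add_mod s 4]
  rw [pow_add, pow_mul, IG4, one_pow, one_mul]

lemma zeta_sq : zetaG ^ 2 = 2 * IG := by
  have : zetaG ^ 2 = zetaG * zetaG := by ring
  rw [this]
  rfl

def reHom : GaussianInt →+ ℤ where
  toFun := Zsqrtd.re
  map_zero' := rfl
  map_add' := fun a b => rfl

lemma zeta_mul_IG_re (r : ℕ) (hr : r < 4) :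
    (zetaG * IG ^ r).re = epsZ r ∧ (zetaG * IG ^ r).im = if r % 4 = 0 ∨ r % 4 = 1 then 1 else -1 := by
  interval_cases r <;> constructor <;> rfl

lemma gauss_re (M : ℕ) :
    (zetaG ^ (M + 1)).re = ∑ s ∈ Finset.range (M + 1), (M.choose s : ℤ) * epsZ s := by
  have hz : zetaG = IG + 1 := rfl
  have hpow : zetaG ^ (M + 1) = ∑ s ∈ Finset.range (M + 1), zetaG * (IG ^ s * (M.choose s : GaussianInt)) := by
    rw [pow_succ', hz]
    rw [add_pow]
    rw [Finset.mul_sum, ← hz]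
    refine Finset.sum_congr rfl fun s _ => ?_
    rw [one_pow, mul_one]
  rw [hpow]
  have : (∑ s ∈ Finset.range (M + 1), zetaG * (IG ^ s * (M.choose s : GaussianInt))).re
      = ∑ s ∈ Finset.range (M + 1), (zetaG * (IG ^ s * (M.choose s : GaussianInt))).re :=
    map_sum reHom _ _
  rw [this]
  refine Finset.sum_congr rfl fun s _ => ?_
  rw [← mul_assoc, IG_pow_mod s]
  have hr : s % 4 < 4 := Nat.mod_lt _ (by norm_num)
  obtain ⟨hre, _⟩ := zeta_mul_IG_re (s % 4) hr
  rw [Zsqrtd.re_mul, hre, Zsqrtd.re_natCast, Zsqrtd.im_natCast]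
  have heps : epsZ (s % 4) = epsZ s := by
    unfold epsZ
    rw [Nat.mod_mod_of_dvd]
    norm_num
  rw [heps]
  ring

lemma gauss_val (hn : n % 4 = 1 ∨ n % 4 = 2) :
    (zetaG ^ (2 * n + 1)).re = -(2 ^ n) := by
  have h1 : zetaG ^ (2 * n + 1) = (2 : GaussianInt) ^ n * (zetaG * IG ^ n) := by
    rw [pow_succ', pow_mul, zeta_sq, mul_pow]
    ring
  rw [h1, IG_pow_mod n]
  have h2 : ((2 : GaussianInt) ^ n) = ((2 ^ n : ℕ) : GaussianInt) := by push_cast; ring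
  obtain ⟨hre, _⟩ := zeta_mul_IG_re (n % 4) (Nat.mod_lt _ (by norm_num))
  rw [h2, Zsqrtd.re_mul, hre, Zsqrtd.re_natCast, Zsqrtd.im_natCast]
  have : epsZ (n % 4) = -1 := by
    unfold epsZ
    rcases hn with h | h <;> rw [h] <;> norm_num
  rw [this]
  push_cast
  ring



lemma master (hn : n % 4 = 1 ∨ n % 4 = 2) (T : Finset (W n)) (hcard : T.card = 2 * n)
    (hind : LinearIndependent (ZMod 2) ((↑) : ↑T → W n))
    (hq : ∀ x ∈ T, qf x = 1)
    (hP : ∀ x ∈ T, ∀ y ∈ T, x ≠ y → Phi x y = 1) : False := by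
  classical
  have hA := sumA (n := n)
  have hB := sumB T hcard hind
  have hval : ∀ U ∈ T.powerset, chi (qf (∑ x ∈ U, x)) = epsZ U.card := by
    intro U hU
    rw [qf_sum T U (Finset.mem_powerset.1 hU) hq hP, chi_rZ]
  rw [Finset.sum_congr rfl hval] at hB
  rw [Finset.sum_powerset_apply_card epsZ, hcard] at hB
  have hsmul : ∀ s ∈ Finset.range (2 * n + 1),
      (2 * n).choose s • epsZ s = ((2 * n).choose s : ℤ) * epsZ s := by
    intro s _
    rw [nsmul_eq_mul]
  rw [Finset.sum_congr rfl hsmul] at hB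
  rw [← gauss_re (2 * n), gauss_val hn] at hB
  rw [hA] at hB
  have hpos : (0 : ℤ) < 2 ^ n := by positivity
  linarith

lemma finrankW : Module.finrank (ZMod 2) (W n) = 2 * n := by
  rw [Module.finrank_prod, Module.finrank_pi]
  simp [Fintype.card_fin]
  ring

lemma boundA (T : Finset (W n))
    (hP : ∀ x ∈ T, ∀ y ∈ T, x ≠ y → Phi x y = 1) :
    T.card ≤ 2 * n + 1 := by
  classical
  rcases T.eq_empty_or_nonempty with he | ⟨t₀, ht₀⟩
  · simp [he]
  have hprop : T.erase t₀ ≠ T := fun hcon => (Finset.notMem_erase t₀ T) (by rw [hcon]; exact ht₀)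
  have hind := indep_of T (T.erase t₀) (Finset.erase_subset _ _) hP (Or.inl hprop)
  have := LinearIndependent.finset_card_le_finrank hind
  rw [finrankW] at this
  have hc := Finset.card_erase_of_mem ht₀
  have h1 : 1 ≤ T.card := Finset.card_pos.2 ⟨t₀, ht₀⟩
  omega

lemma full_sum_zero (T : Finset (W n))
    (hnind : ¬ LinearIndependent (ZMod 2) ((↑) : ↑T → W n))
    (hP : ∀ x ∈ T, ∀ y ∈ T, x ≠ y → Phi x y = 1) :
    (∑ x ∈ T, x) = 0 ∧ T.card % 2 = 1 := by
  classical
  obtain ⟨g, hg, i₀, hi₀⟩ := Fintype.not_linearIndependent_iff.1 hnind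
  set g' : W n → ZMod 2 := fun x => if h : x ∈ T then g ⟨x, h⟩ else 0 with hg'
  have hsum : ∑ x ∈ T.filter (fun x => g' x = 1), x = 0 := by
    have e1 : ∑ i : ↑T, g i • (i : W n) = ∑ x ∈ T, g' x • x := by
      rw [← Finset.sum_coe_sort T (fun x => g' x • x)]
      refine Finset.sum_congr rfl fun i _ => ?_
      simp [hg', i.2]
    have e2 : ∑ x ∈ T, g' x • x = ∑ x ∈ T.filter (fun x => g' x = 1), x := by
      rw [Finset.sum_filter]
      refine Finset.sum_congr rfl fun x _ => ?_
      have h01 : ∀ a : ZMod 2, a = 0 ∨ a = 1 := by decide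
      rcases h01 (g' x) with h | h <;> simp [h]
    rw [← e2, ← e1, hg]
  have hne : (i₀ : W n) ∈ T.filter (fun x => g' x = 1) := by
    refine Finset.mem_filter.2 ⟨i₀.2, ?_⟩
    have : g' (i₀ : W n) = g i₀ := by simp [hg', i₀.2]
    rw [this]
    have h1 : ∀ a : ZMod 2, a ≠ 0 → a = 1 := by decide
    exact h1 _ hi₀
  rcases dep_cases T (T.filter (fun x => g' x = 1)) (Finset.filter_subset _ _) hP hsum with
    he | ⟨heq, hodd⟩
  · rw [he] at hne; exact absurd hne (Finset.notMem_empty _)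
  · rw [heq] at hsum
    exact ⟨hsum, hodd⟩

lemma boundB (hn2 : n % 2 = 0) (T : Finset (W n))
    (hq : ∀ x ∈ T, qf x = 1)
    (hP : ∀ x ∈ T, ∀ y ∈ T, x ≠ y → Phi x y = 1) :
    T.card ≤ 2 * n := by
  classical
  by_contra hcon
  push_neg at hcon
  have hA := boundA T hP
  have hcard : T.card = 2 * n + 1 := by omega
  have hnind : ¬ LinearIndependent (ZMod 2) ((↑) : ↑T → W n) := by
    intro hind
    have := LinearIndependent.finset_card_le_finrank hind
    rw [finrankW] at this
    omega
  obtain ⟨hsum0, _⟩ := full_sum_zero T hnind hP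
  have hTne : T.Nonempty := Finset.card_pos.1 (by omega)
  obtain ⟨t₀, ht₀⟩ := hTne
  have herase : ∑ x ∈ T.erase t₀, x = t₀ := by
    have h1 : t₀ + ∑ x ∈ T.erase t₀, x = 0 := by
      rw [Finset.add_sum_erase T (fun x => x) ht₀]; exact hsum0
    have hself : ∀ a : W n, a + a = 0 := by
      intro a
      have h2 : ∀ b : ZMod 2, b + b = 0 := by decide
      ext t <;> exact h2 _
    calc ∑ x ∈ T.erase t₀, x = t₀ + (t₀ + ∑ x ∈ T.erase t₀, x) := by
          rw [← add_assoc, hself, zero_add]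
      _ = t₀ := by rw [h1, add_zero]
  have hq1 : qf t₀ = 1 := hq t₀ ht₀
  have hq0 : qf (∑ x ∈ T.erase t₀, x) = rZ (T.erase t₀).card :=
    qf_sum T (T.erase t₀) (Finset.erase_subset _ _) hq hP
  rw [herase] at hq0
  have hcard' : (T.erase t₀).card = 2 * n := by
    rw [Finset.card_erase_of_mem ht₀, hcard]
    omega
  rw [hcard'] at hq0
  have hrz : rZ (2 * n) = 0 := by
    unfold rZ
    rw [if_pos]
    left
    omega
  rw [hq1, hrz] at hq0
  exact one_ne_zero hq0

lemma boundC (hn : n % 4 = 1 ∨ n % 4 = 2) (T : Finset (W n))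
    (hq : ∀ x ∈ T, qf x = 1)
    (hP : ∀ x ∈ T, ∀ y ∈ T, x ≠ y → Phi x y = 1) :
    T.card ≤ 2 * n - 1 := by
  classical
  by_contra hcon
  push_neg at hcon
  have hn1 : 1 ≤ n := by omega
  have h2n : 2 * n ≤ T.card := by omega
  obtain ⟨T'', hsub, hcard''⟩ := Finset.exists_subset_card_eq h2n
  have hind : LinearIndependent (ZMod 2) ((↑) : ↑T'' → W n) := by
    by_cases hTT : T'' = T
    · exact indep_of T T'' hsub hP (Or.inr (by rw [← hTT, hcard'']; omega))
    · exact indep_of T T'' hsub hP (Or.inl hTT)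
  exact master hn T'' hcard'' hind (fun x hx => hq x (hsub hx))
    (fun x hx y hy hxy => hP x (hsub hx) y (hsub hy) hxy)



def Lv (c : Fin n → Fin n → Fin n → ZMod 2) (x : V n) : V n :=
  fun t => ell c x (Pi.single t 1)

lemma ell_expand (c : Fin n → Fin n → Fin n → ZMod 2) (x y : V n) :
    ell c x y = ∑ t, Lv c x t * y t := by
  have hy : y = ∑ t, y t • Pi.single t (1 : ZMod 2) := by
    ext j
    simp [Finset.sum_apply, Pi.single_apply]
  conv_lhs => rw [hy]
  have hmap : ell c x (∑ t, y t • Pi.single t (1 : ZMod 2))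
      = ∑ t, ell c x (y t • Pi.single t (1 : ZMod 2)) :=
    map_sum (AddMonoidHom.mk' (ell c x) (ell_add_right x)) _ _
  rw [hmap]
  refine Finset.sum_congr rfl fun t _ => ?_
  rw [ell_smul_right x _ (y t), mul_comm]
  rfl

end CubicHR

theorem card_le_hurwitzRadon_of_cubicForm
    (n : ℕ) (α : (Fin n → ZMod 2) → ZMod 2) (hα : IsCubicForm α)
    (A : Finset (Fin n → ZMod 2))
    (h : ∀ x ∈ A, ∀ x' ∈ A, x ≠ x' → α (x + x') = 1) :
    A.card ≤ hurwitzRadonPow2 n := by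
  classical
  obtain ⟨c, hc⟩ := hα
  rcases A.eq_empty_or_nonempty with hA0 | ⟨x₀, hx₀⟩
  · simp [hA0]
  have hself : ∀ v : CubicHR.V n, v + v = 0 := by
    intro v
    have h2 : ∀ b : ZMod 2, b + b = 0 := by decide
    ext t <;> exact h2 _
  set B := A.image (fun a => a + x₀) with hB
  have hBcard : B.card = A.card :=
    Finset.card_image_of_injective _ (add_left_injective x₀)
  have h0B : (0 : CubicHR.V n) ∈ B := Finset.mem_image.2 ⟨x₀, hx₀, hself x₀⟩
  set S := B.erase 0 with hS
  have hScard : S.card = A.card - 1 := by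
    rw [hS, Finset.card_erase_of_mem h0B, hBcard]
  have hmemS : ∀ x ∈ S, ∃ a ∈ A, a ≠ x₀ ∧ x = a + x₀ := by
    intro x hx
    obtain ⟨hx0, hxB⟩ := Finset.mem_erase.1 hx
    obtain ⟨a, ha, rfl⟩ := Finset.mem_image.1 hxB
    refine ⟨a, ha, ?_, rfl⟩
    rintro rfl
    exact hx0 (hself a)
  have hαS : ∀ x ∈ S, α x = 1 := by
    intro x hx
    obtain ⟨a, ha, hne, rfl⟩ := hmemS x hx
    exact h a ha x₀ hx₀ hne
  have hαSS : ∀ x ∈ S, ∀ y ∈ S, x ≠ y → α (x + y) = 1 := by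
    intro x hx y hy hxy
    obtain ⟨a, ha, -, rfl⟩ := hmemS x hx
    obtain ⟨a', ha', -, rfl⟩ := hmemS y hy
    have hxy' : a ≠ a' := by
      rintro rfl; exact hxy rfl
    have hsum : (a + x₀) + (a' + x₀) = a + a' := by
      have : (a + x₀) + (a' + x₀) = (a + a') + (x₀ + x₀) := by ring
      rw [this, hself, add_zero]
    rw [hsum]
    exact h a ha a' ha' hxy'
  set wm : CubicHR.V n → CubicHR.W n := fun x => (x, CubicHR.Lv c x) with hwm
  set T := S.image wm with hT
  have hTcard : T.card = S.card :=
    Finset.card_image_of_injOn (fun x _ y _ hxy => congrArg Prod.fst hxy)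
  have hqw : ∀ x, CubicHR.qf (wm x) = α x := by
    intro x
    show (∑ t, CubicHR.Lv c x t * x t) = α x
    rw [← CubicHR.ell_expand c x x, CubicHR.ell_self hc x]
  have hPw : ∀ x y, CubicHR.Phi (wm x) (wm y) = α (x + y) + α x + α y := by
    intro x y
    show (∑ t, CubicHR.Lv c x t * y t) + (∑ t, CubicHR.Lv c y t * x t) = _
    rw [← CubicHR.ell_expand c x y, ← CubicHR.ell_expand c y x]
    rw [CubicHR.deriv_eq hc x y]
    have halg : ∀ a b u v : ZMod 2, u + v = a + b + u + v + a + b := by decide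
    exact halg _ _ _ _
  have hqT : ∀ w ∈ T, CubicHR.qf w = 1 := by
    intro w hw
    obtain ⟨x, hx, rfl⟩ := Finset.mem_image.1 hw
    rw [hqw]
    exact hαS x hx
  have hPT : ∀ w ∈ T, ∀ w' ∈ T, w ≠ w' → CubicHR.Phi w w' = 1 := by
    intro w hw w' hw' hne
    obtain ⟨x, hx, rfl⟩ := Finset.mem_image.1 hw
    obtain ⟨y, hy, rfl⟩ := Finset.mem_image.1 hw'
    have hxy : x ≠ y := by rintro rfl; exact hne rfl
    rw [hPw, hαSS x hx y hy hxy, hαS x hx, hαS y hy]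
    decide
  have hA1 : 1 ≤ A.card := Finset.card_pos.2 ⟨x₀, hx₀⟩
  have hAT : A.card = T.card + 1 := by
    rw [hTcard, hScard]; omega
  unfold hurwitzRadonPow2
  split_ifs with h0 h3
  · have := CubicHR.boundB (by omega) T hqT hPT
    omega
  · have := CubicHR.boundA T hPT
    omega
  · have hn : n % 4 = 1 ∨ n % 4 = 2 := by omega
    have := CubicHR.boundC hn T hqT hPT
    have hn1 : 1 ≤ n := by omega
    omega
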